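/- arXiv:1707.02811 — 2 statements merged into one kernel-verified Lean document; each statement's English description precedes it below -/
import Mathlib

section
/- Let Γ : ℝ³ → ℝ be defined by Γ(c1,c2,c3) = ((c1² + c2²)² + 16·c3²)^{−1/2} (the Folland–Kaplan–Korányi gauge raised to the power 2 − Q with homogeneous dimension Q = 4). Let the left-invariant vector fields of the Heisenberg group act on smooth functions g : ℝ³ → ℝ by (X₁g)(c) = ∂g/∂c1(c) + (c2/2)·∂g/∂c3(c) and (X₂g)(c) = ∂g/∂c2(c) − (c1/2)·∂g/∂c3(c). Then Γ is harmonic for the sub-Laplacian away from the origin: for every c ∈ ℝ³ with c ≠ (0,0,0), (X₁(X₁Γ))(c) + (X₂(X₂Γ))(c) = 0. -/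
/-- Partial derivative in the first coordinate. -/
noncomputable def pderiv1 (g : ℝ × ℝ × ℝ → ℝ) (c : ℝ × ℝ × ℝ) : ℝ :=
  deriv (fun t => g (t, c.2.1, c.2.2)) c.1

/-- Partial derivative in the second coordinate. -/
noncomputable def pderiv2 (g : ℝ × ℝ × ℝ → ℝ) (c : ℝ × ℝ × ℝ) : ℝ :=
  deriv (fun t => g (c.1, t, c.2.2)) c.2.1

/-- Partial derivative in the third coordinate. -/
noncomputable def pderiv3 (g : ℝ × ℝ × ℝ → ℝ) (c : ℝ × ℝ × ℝ) : ℝ :=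
  deriv (fun t => g (c.1, c.2.1, t)) c.2.2

/-- The left-invariant vector field `X₁ = ∂_{c1} + (c2/2)∂_{c3}` of the Heisenberg group. -/
noncomputable def heisX1 (g : ℝ × ℝ × ℝ → ℝ) (c : ℝ × ℝ × ℝ) : ℝ :=
  pderiv1 g c + (c.2.1 / 2) * pderiv3 g c

/-- The left-invariant vector field `X₂ = ∂_{c2} − (c1/2)∂_{c3}` of the Heisenberg group. -/
noncomputable def heisX2 (g : ℝ × ℝ × ℝ → ℝ) (c : ℝ × ℝ × ℝ) : ℝ :=
  pderiv2 g c - (c.1 / 2) * pderiv3 g c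

/-- The Folland–Kaplan–Korányi gauge raised to the power `2 − Q`, `Q = 4`:
`Γ(c1,c2,c3) = ((c1² + c2²)² + 16·c3²)^(−1/2)`. -/
noncomputable def heisGamma (c : ℝ × ℝ × ℝ) : ℝ :=
  ((c.1 ^ 2 + c.2.1 ^ 2) ^ 2 + 16 * c.2.2 ^ 2) ^ (-(1 : ℝ) / 2)

-- auxiliary
noncomputable def F1 (c : ℝ × ℝ × ℝ) : ℝ :=
  -(2 * c.1 * (c.1 ^ 2 + c.2.1 ^ 2) + 8 * c.2.1 * c.2.2) *
    ((c.1 ^ 2 + c.2.1 ^ 2) ^ 2 + 16 * c.2.2 ^ 2) ^ (-(3 : ℝ) / 2)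

noncomputable def F2 (c : ℝ × ℝ × ℝ) : ℝ :=
  -(2 * c.2.1 * (c.1 ^ 2 + c.2.1 ^ 2) - 8 * c.1 * c.2.2) *
    ((c.1 ^ 2 + c.2.1 ^ 2) ^ 2 + 16 * c.2.2 ^ 2) ^ (-(3 : ℝ) / 2)

lemma Npos (x y z : ℝ) (h : (x, y, z) ≠ ((0:ℝ), (0:ℝ), (0:ℝ))) :
    0 < (x ^ 2 + y ^ 2) ^ 2 + 16 * z ^ 2 := by
  have h' : x ≠ 0 ∨ y ≠ 0 ∨ z ≠ 0 := by
    by_contra hc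
    push_neg at hc
    exact h (by simp [hc.1, hc.2.1, hc.2.2])
  rcases h' with hx | hy | hz
  · positivity
  · positivity
  · positivity

lemma hN1 (x y z : ℝ) :
    HasDerivAt (fun t => (t ^ 2 + y ^ 2) ^ 2 + 16 * z ^ 2) (4 * x * (x ^ 2 + y ^ 2)) x := by
  have h := (((hasDerivAt_pow 2 x).add_const (y ^ 2)).pow 2).add_const (16 * z ^ 2)
  refine h.congr_deriv ?_
  push_cast
  ring

lemma hN2 (x y z : ℝ) :
    HasDerivAt (fun t => (x ^ 2 + t ^ 2) ^ 2 + 16 * z ^ 2) (4 * y * (x ^ 2 + y ^ 2)) y := by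
  have h := (((hasDerivAt_pow 2 y).const_add (x ^ 2)).pow 2).add_const (16 * z ^ 2)
  refine h.congr_deriv ?_
  push_cast
  ring

lemma hN3 (x y z : ℝ) :
    HasDerivAt (fun t => (x ^ 2 + y ^ 2) ^ 2 + 16 * t ^ 2) (32 * z) z := by
  have h := (((hasDerivAt_pow 2 z).const_mul 16)).const_add ((x ^ 2 + y ^ 2) ^ 2)
  refine h.congr_deriv ?_
  push_cast
  ring

lemma X1_eq (c : ℝ × ℝ × ℝ) (h : c ≠ (0, 0, 0)) : heisX1 heisGamma c = F1 c := by
  obtain ⟨x, y, z⟩ := c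
  have hN : ((x ^ 2 + y ^ 2) ^ 2 + 16 * z ^ 2) ≠ 0 := (Npos x y z h).ne'
  have hNpos := Npos x y z h
  have d1 := (hN1 x y z).rpow_const (p := -(1:ℝ)/2) (Or.inl hN)
  have d3 := (hN3 x y z).rpow_const (p := -(1:ℝ)/2) (Or.inl hN)
  have e1 : pderiv1 heisGamma (x, y, z) =
      4 * x * (x ^ 2 + y ^ 2) * (-(1:ℝ)/2) *
        ((x ^ 2 + y ^ 2) ^ 2 + 16 * z ^ 2) ^ (-(1:ℝ)/2 - 1) := by
    unfold pderiv1
    simp only [heisGamma]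
    exact d1.deriv
  have e3 : pderiv3 heisGamma (x, y, z) =
      32 * z * (-(1:ℝ)/2) * ((x ^ 2 + y ^ 2) ^ 2 + 16 * z ^ 2) ^ (-(1:ℝ)/2 - 1) := by
    unfold pderiv3
    simp only [heisGamma]
    exact d3.deriv
  simp only [heisX1, e1, e3, F1]
  rw [show (-(1:ℝ)/2 - 1) = -(3:ℝ)/2 by norm_num]
  ring

lemma X2_eq (c : ℝ × ℝ × ℝ) (h : c ≠ (0, 0, 0)) : heisX2 heisGamma c = F2 c := by
  obtain ⟨x, y, z⟩ := c
  have hN : ((x ^ 2 + y ^ 2) ^ 2 + 16 * z ^ 2) ≠ 0 := (Npos x y z h).ne'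
  have d2 := (hN2 x y z).rpow_const (p := -(1:ℝ)/2) (Or.inl hN)
  have d3 := (hN3 x y z).rpow_const (p := -(1:ℝ)/2) (Or.inl hN)
  have e2 : pderiv2 heisGamma (x, y, z) =
      4 * y * (x ^ 2 + y ^ 2) * (-(1:ℝ)/2) *
        ((x ^ 2 + y ^ 2) ^ 2 + 16 * z ^ 2) ^ (-(1:ℝ)/2 - 1) := by
    unfold pderiv2
    simp only [heisGamma]
    exact d2.deriv
  have e3 : pderiv3 heisGamma (x, y, z) =
      32 * z * (-(1:ℝ)/2) * ((x ^ 2 + y ^ 2) ^ 2 + 16 * z ^ 2) ^ (-(1:ℝ)/2 - 1) := by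
    unfold pderiv3
    simp only [heisGamma]
    exact d3.deriv
  simp only [heisX2, e2, e3, F2]
  rw [show (-(1:ℝ)/2 - 1) = -(3:ℝ)/2 by norm_num]
  ring

/-- `Γ` is harmonic for the Kohn sub-Laplacian `𝓛₀ = X₁² + X₂²` away from the origin. -/
theorem heisGamma_subLaplacian_harmonic :
    ∀ c : ℝ × ℝ × ℝ, c ≠ (0, 0, 0) →
      heisX1 (heisX1 heisGamma) c + heisX2 (heisX2 heisGamma) c = 0 := by
  rintro ⟨x, y, z⟩ h
  have hN : ((x ^ 2 + y ^ 2) ^ 2 + 16 * z ^ 2) ≠ 0 := (Npos x y z h).ne'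
  have hNpos := Npos x y z h
  have hopen : IsOpen {c : ℝ × ℝ × ℝ | c ≠ (0, 0, 0)} := isOpen_ne
  -- eventual equalities along the three coordinate lines
  have hmem1 : ∀ᶠ t in nhds x, heisX1 heisGamma (t, y, z) = F1 (t, y, z) := by
    have hc : Continuous fun t : ℝ => ((t, y, z) : ℝ × ℝ × ℝ) :=
      continuous_id.prodMk continuous_const
    filter_upwards [hc.continuousAt.preimage_mem_nhds (hopen.mem_nhds h)] with t ht
    exact X1_eq _ ht
  have hmem2 : ∀ᶠ t in nhds y, heisX2 heisGamma (x, t, z) = F2 (x, t, z) := by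
    have hc : Continuous fun t : ℝ => ((x, t, z) : ℝ × ℝ × ℝ) :=
      continuous_const.prodMk (continuous_id.prodMk continuous_const)
    filter_upwards [hc.continuousAt.preimage_mem_nhds (hopen.mem_nhds h)] with t ht
    exact X2_eq _ ht
  have hmem31 : ∀ᶠ t in nhds z, heisX1 heisGamma (x, y, t) = F1 (x, y, t) := by
    have hc : Continuous fun t : ℝ => ((x, y, t) : ℝ × ℝ × ℝ) :=
      continuous_const.prodMk (continuous_const.prodMk continuous_id)
    filter_upwards [hc.continuousAt.preimage_mem_nhds (hopen.mem_nhds h)] with t ht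
    exact X1_eq _ ht
  have hmem32 : ∀ᶠ t in nhds z, heisX2 heisGamma (x, y, t) = F2 (x, y, t) := by
    have hc : Continuous fun t : ℝ => ((x, y, t) : ℝ × ℝ × ℝ) :=
      continuous_const.prodMk (continuous_const.prodMk continuous_id)
    filter_upwards [hc.continuousAt.preimage_mem_nhds (hopen.mem_nhds h)] with t ht
    exact X2_eq _ ht
  -- second derivative computations
  have hR1 := (hN1 x y z).rpow_const (p := -(3:ℝ)/2) (Or.inl hN)
  have hR2 := (hN2 x y z).rpow_const (p := -(3:ℝ)/2) (Or.inl hN)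
  have hR3 := (hN3 x y z).rpow_const (p := -(3:ℝ)/2) (Or.inl hN)
  have hA1 : HasDerivAt (fun t => 2 * t * (t ^ 2 + y ^ 2) + 8 * y * z)
      (2 * (x ^ 2 + y ^ 2) + 4 * x ^ 2) x := by
    have h' := (((hasDerivAt_id x).const_mul 2).mul
      ((hasDerivAt_pow 2 x).add_const (y ^ 2))).add_const (8 * y * z)
    refine h'.congr_deriv ?_
    simp only [id_eq]
    push_cast
    ring
  have hA3 : HasDerivAt (fun t => 2 * x * (x ^ 2 + y ^ 2) + 8 * y * t) (8 * y) z := by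
    have h' := ((hasDerivAt_id z).const_mul (8 * y)).const_add (2 * x * (x ^ 2 + y ^ 2))
    refine h'.congr_deriv ?_
    ring
  have hB2 : HasDerivAt (fun t => 2 * t * (x ^ 2 + t ^ 2) - 8 * x * z)
      (2 * (x ^ 2 + y ^ 2) + 4 * y ^ 2) y := by
    have h' := (((hasDerivAt_id y).const_mul 2).mul
      ((hasDerivAt_pow 2 y).const_add (x ^ 2))).sub_const (8 * x * z)
    refine h'.congr_deriv ?_
    simp only [id_eq]
    push_cast
    ring
  have hB3 : HasDerivAt (fun t => 2 * y * (x ^ 2 + y ^ 2) - 8 * x * t) (-(8 * x)) z := by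
    have h' := (((hasDerivAt_id z).const_mul (8 * x)).const_sub (2 * y * (x ^ 2 + y ^ 2)))
    refine h'.congr_deriv ?_
    ring
  -- derivatives of F1, F2
  have dF1_1 : HasDerivAt (fun t => F1 (t, y, z))
      (-(2 * (x ^ 2 + y ^ 2) + 4 * x ^ 2) *
        ((x ^ 2 + y ^ 2) ^ 2 + 16 * z ^ 2) ^ (-(3:ℝ)/2) +
       -(2 * x * (x ^ 2 + y ^ 2) + 8 * y * z) *
        (4 * x * (x ^ 2 + y ^ 2) * (-(3:ℝ)/2) *
          ((x ^ 2 + y ^ 2) ^ 2 + 16 * z ^ 2) ^ (-(3:ℝ)/2 - 1))) x := by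
    exact (hA1.neg.mul hR1).congr_deriv (by simp only [Pi.neg_apply])
  have dF1_3 : HasDerivAt (fun t => F1 (x, y, t))
      (-(8 * y) * ((x ^ 2 + y ^ 2) ^ 2 + 16 * z ^ 2) ^ (-(3:ℝ)/2) +
       -(2 * x * (x ^ 2 + y ^ 2) + 8 * y * z) *
        (32 * z * (-(3:ℝ)/2) *
          ((x ^ 2 + y ^ 2) ^ 2 + 16 * z ^ 2) ^ (-(3:ℝ)/2 - 1))) z := by
    exact (hA3.neg.mul hR3).congr_deriv (by simp only [Pi.neg_apply])
  have dF2_2 : HasDerivAt (fun t => F2 (x, t, z))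
      (-(2 * (x ^ 2 + y ^ 2) + 4 * y ^ 2) *
        ((x ^ 2 + y ^ 2) ^ 2 + 16 * z ^ 2) ^ (-(3:ℝ)/2) +
       -(2 * y * (x ^ 2 + y ^ 2) - 8 * x * z) *
        (4 * y * (x ^ 2 + y ^ 2) * (-(3:ℝ)/2) *
          ((x ^ 2 + y ^ 2) ^ 2 + 16 * z ^ 2) ^ (-(3:ℝ)/2 - 1))) y := by
    exact (hB2.neg.mul hR2).congr_deriv (by simp only [Pi.neg_apply])
  have dF2_3 : HasDerivAt (fun t => F2 (x, y, t))
      (-(-(8 * x)) * ((x ^ 2 + y ^ 2) ^ 2 + 16 * z ^ 2) ^ (-(3:ℝ)/2) +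
       -(2 * y * (x ^ 2 + y ^ 2) - 8 * x * z) *
        (32 * z * (-(3:ℝ)/2) *
          ((x ^ 2 + y ^ 2) ^ 2 + 16 * z ^ 2) ^ (-(3:ℝ)/2 - 1))) z := by
    exact (hB3.neg.mul hR3).congr_deriv (by simp only [Pi.neg_apply])
  have e1 : pderiv1 (heisX1 heisGamma) (x, y, z) = deriv (fun t => F1 (t, y, z)) x := by
    unfold pderiv1
    exact Filter.EventuallyEq.deriv_eq hmem1
  have e3 : pderiv3 (heisX1 heisGamma) (x, y, z) = deriv (fun t => F1 (x, y, t)) z := by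
    unfold pderiv3
    exact Filter.EventuallyEq.deriv_eq hmem31
  have f2 : pderiv2 (heisX2 heisGamma) (x, y, z) = deriv (fun t => F2 (x, t, z)) y := by
    unfold pderiv2
    exact Filter.EventuallyEq.deriv_eq hmem2
  have f3 : pderiv3 (heisX2 heisGamma) (x, y, z) = deriv (fun t => F2 (x, y, t)) z := by
    unfold pderiv3
    exact Filter.EventuallyEq.deriv_eq hmem32
  have hsplit : ((x ^ 2 + y ^ 2) ^ 2 + 16 * z ^ 2) ^ (-(3:ℝ)/2) =
      ((x ^ 2 + y ^ 2) ^ 2 + 16 * z ^ 2) *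
        ((x ^ 2 + y ^ 2) ^ 2 + 16 * z ^ 2) ^ (-(5:ℝ)/2) := by
    rw [show (-(3:ℝ)/2) = 1 + (-(5:ℝ)/2) by norm_num, Real.rpow_add hNpos, Real.rpow_one]
  simp only [heisX1, heisX2] at *
  rw [e1, e3, f2, f3, dF1_1.deriv, dF1_3.deriv, dF2_2.deriv, dF2_3.deriv]
  rw [show (-(3:ℝ)/2 - 1) = -(5:ℝ)/2 by norm_num, hsplit]
  ring
end

section
/- Let (c4,c5,c6) ∈ ℝ³ with q = √(c4² + c5² + c6²) > 0, let Ω be the associated 3×3 skew-symmetric matrix, and let v ∈ ℝ³. Let M be the 4×4 matrix with upper-left 3×3 block Ω, upper-right 3×1 block v, and zero bottom row. Then exp(M) is the 4×4 matrix with upper-left block exp(Ω), upper-right block J·v, and bottom row (0,0,0,1), where J = I + ((1 − cos q)/q²)·Ω + ((q − sin q)/q³)·Ω². -/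
open NormedSpace Matrix

/-- The skew-symmetric matrix `Ω(c4,c5,c6) = [[0,−c6,c5],[c6,0,−c4],[−c5,c4,0]]`. -/
noncomputable def skewOmega (c4 c5 c6 : ℝ) : Matrix (Fin 3) (Fin 3) ℝ :=
  !![0, -c6, c5; c6, 0, -c4; -c5, c4, 0]

lemma skewOmega_pow_three (c4 c5 c6 : ℝ) :
    (skewOmega c4 c5 c6) ^ 3 = (-(c4^2+c5^2+c6^2)) • skewOmega c4 c5 c6 := by
  ext i j
  fin_cases i <;> fin_cases j <;>
    simp [skewOmega, pow_succ, Matrix.mul_apply, Fin.sum_univ_three] <;> ring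

lemma skewOmega_pow_odd (c4 c5 c6 : ℝ) (k : ℕ) :
    (skewOmega c4 c5 c6) ^ (2*k+1) = ((-(c4^2+c5^2+c6^2))^k) • skewOmega c4 c5 c6 := by
  induction k with
  | zero => simp
  | succ k ih =>
    have h : 2*(k+1)+1 = (2*k+1) + 2 := by ring
    rw [h, pow_add, ih, smul_mul_assoc, ← pow_succ']
    rw [show (2:ℕ)+1 = 3 from rfl, skewOmega_pow_three, smul_smul, ← pow_succ]

lemma skewOmega_pow_even (c4 c5 c6 : ℝ) (k : ℕ) :
    (skewOmega c4 c5 c6) ^ (2*k+2) = ((-(c4^2+c5^2+c6^2))^k) • (skewOmega c4 c5 c6)^2 := by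
  have h : 2*k+2 = (2*k+1) + 1 := by ring
  rw [h, pow_succ, skewOmega_pow_odd, smul_mul_assoc, ← pow_two]

lemma hasSum_coeff1 {q : ℝ} (hq : 0 < q) :
    HasSum (fun k : ℕ => (((2*k+2).factorial : ℝ))⁻¹ * (-(q^2))^k) ((1 - Real.cos q)/q^2) := by
  have h := (hasSum_nat_add_iff' (f := fun n : ℕ => (-1:ℝ)^n * q^(2*n)/(2*n).factorial) 1).mpr
    (Real.hasSum_cos q)
  simp only [Finset.sum_range_one, pow_zero, Nat.mul_zero, Nat.factorial_zero, Nat.cast_one,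
    div_one, one_mul] at h
  have h2 := (h.neg).div_const (q^2)
  rw [neg_sub] at h2
  convert h2 using 2 with k
  · rfl
  have hfac : ((2*(k+1)).factorial : ℝ) ≠ 0 := Nat.cast_ne_zero.mpr (Nat.factorial_ne_zero _)
  have hq0 : q ≠ 0 := ne_of_gt hq
  have hpow : (-(q^2))^k = (-1:ℝ)^k * q^(2*k) := by
    rw [neg_pow, pow_mul]
  have h2k : (2*(k+1)) = 2*k+2 := by ring
  rw [h2k, hpow]
  field_simp
  ring

lemma hasSum_coeff2 {q : ℝ} (hq : 0 < q) :
    HasSum (fun k : ℕ => (((2*k+3).factorial : ℝ))⁻¹ * (-(q^2))^k) ((q - Real.sin q)/q^3) := by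
  have h := (hasSum_nat_add_iff' (f := fun n : ℕ => (-1:ℝ)^n * q^(2*n+1)/(2*n+1).factorial) 1).mpr
    (Real.hasSum_sin q)
  simp only [Finset.sum_range_one, pow_zero, Nat.mul_zero, Nat.zero_add, Nat.factorial_one,
    Nat.cast_one, div_one, one_mul, pow_one] at h
  have h2 := (h.neg).div_const (q^3)
  rw [neg_sub] at h2
  convert h2 using 2 with k
  · rfl
  have hfac : ((2*(k+1)+1).factorial : ℝ) ≠ 0 := Nat.cast_ne_zero.mpr (Nat.factorial_ne_zero _)
  have hq0 : q ≠ 0 := ne_of_gt hq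
  have hpow : (-(q^2))^k = (-1:ℝ)^k * q^(2*k) := by rw [neg_pow, pow_mul]
  have h2k : (2*(k+1)+1) = 2*k+3 := by ring
  rw [h2k, hpow]
  field_simp
  ring

/-- The matrix `J = I + ((1 − cos q)/q²)·Ω + ((q − sin q)/q³)·Ω²` appearing in the
explicit exponential map of `SE(3)`. -/
noncomputable def se3J (c4 c5 c6 : ℝ) : Matrix (Fin 3) (Fin 3) ℝ :=
  1 + ((1 - Real.cos (Real.sqrt (c4 ^ 2 + c5 ^ 2 + c6 ^ 2))) /
        (Real.sqrt (c4 ^ 2 + c5 ^ 2 + c6 ^ 2)) ^ 2) • skewOmega c4 c5 c6 +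
    ((Real.sqrt (c4 ^ 2 + c5 ^ 2 + c6 ^ 2) - Real.sin (Real.sqrt (c4 ^ 2 + c5 ^ 2 + c6 ^ 2))) /
        (Real.sqrt (c4 ^ 2 + c5 ^ 2 + c6 ^ 2)) ^ 3) • (skewOmega c4 c5 c6) ^ 2

set_option maxHeartbeats 1000000 in
lemma hasSum_se3J (c4 c5 c6 : ℝ)
    (hq : 0 < Real.sqrt (c4 ^ 2 + c5 ^ 2 + c6 ^ 2)) :
    HasSum (fun n : ℕ => (((n+1).factorial : ℝ))⁻¹ • (skewOmega c4 c5 c6) ^ n)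
      (se3J c4 c5 c6) := by
  set q := Real.sqrt (c4 ^ 2 + c5 ^ 2 + c6 ^ 2) with hqdef
  have hs : q^2 = c4 ^ 2 + c5 ^ 2 + c6 ^ 2 := Real.sq_sqrt (by positivity)
  set Ω := skewOmega c4 c5 c6 with hΩdef
  -- shifted series
  have he : HasSum (fun k : ℕ => (((2*k+1+1).factorial : ℝ))⁻¹ • Ω ^ (2*k+1))
      (((1 - Real.cos q)/q^2) • Ω) := by
    have := (hasSum_coeff1 hq).smul_const Ω
    convert this using 2 with k
    rw [skewOmega_pow_odd, smul_smul, ← hs]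
  have ho : HasSum (fun k : ℕ => (((2*k+1+1+1).factorial : ℝ))⁻¹ • Ω ^ (2*k+1+1))
      (((q - Real.sin q)/q^3) • Ω^2) := by
    have := (hasSum_coeff2 hq).smul_const (Ω^2)
    convert this using 2 with k
    rw [show 2*k+1+1 = 2*k+2 from rfl, skewOmega_pow_even, smul_smul, ← hs]
  have hg : HasSum (fun n : ℕ => (((n+1+1).factorial : ℝ))⁻¹ • Ω ^ (n+1))
      (((1 - Real.cos q)/q^2) • Ω + ((q - Real.sin q)/q^3) • Ω^2) :=
    he.even_add_odd ho
  have := (hasSum_nat_add_iff (f := fun n : ℕ => (((n+1).factorial : ℝ))⁻¹ • Ω ^ n) 1).mp hg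
  norm_num at this
  rw [se3J, hΩdef.symm, ← hqdef]
  convert this using 1
  · rfl
  abel

lemma hasSum_exp_matrix {n : Type*} [Fintype n] [DecidableEq n] (A : Matrix n n ℝ) :
    HasSum (fun k : ℕ => ((k.factorial : ℝ))⁻¹ • A ^ k) (NormedSpace.exp A) := by
  letI : SeminormedRing (Matrix n n ℝ) := Matrix.linftyOpSemiNormedRing
  letI : NormedRing (Matrix n n ℝ) := Matrix.linftyOpNormedRing
  letI : NormedAlgebra ℝ (Matrix n n ℝ) := Matrix.linftyOpNormedAlgebra
  rw [exp_eq_tsum (𝕂 := ℝ)]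
  exact (NormedSpace.expSeries_summable' (𝕂 := ℝ) A).hasSum

lemma blockM_pow (c4 c5 c6 : ℝ) (v : Fin 3 → ℝ) (n : ℕ) :
    (fromBlocks (skewOmega c4 c5 c6) (replicateCol (Fin 1) v) (0 : Matrix (Fin 1) (Fin 3) ℝ)
        (0 : Matrix (Fin 1) (Fin 1) ℝ)) ^ (n+1) =
      fromBlocks ((skewOmega c4 c5 c6) ^ (n+1)) ((skewOmega c4 c5 c6) ^ n * replicateCol (Fin 1) v)
        (0 : Matrix (Fin 1) (Fin 3) ℝ) (0 : Matrix (Fin 1) (Fin 1) ℝ) := by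
  induction n with
  | zero => simp
  | succ n ih =>
    rw [pow_succ, ih, fromBlocks_multiply]
    simp [pow_succ, Matrix.mul_assoc]

/-- The explicit exponential map `Exp : se(3) → SE(3)`: for `q = √(c4²+c5²+c6²) > 0`,
`v ∈ ℝ³`, and `M` the 4×4 matrix with upper-left block `Ω`, upper-right block `v` and
zero bottom row, `exp(M)` has upper-left block `exp(Ω)`, upper-right block `J·v` and
bottom row `(0,0,0,1)`. -/
theorem se3_exp_block_formula (c4 c5 c6 : ℝ)
    (hq : 0 < Real.sqrt (c4 ^ 2 + c5 ^ 2 + c6 ^ 2)) (v : Fin 3 → ℝ) :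
    NormedSpace.exp (fromBlocks (skewOmega c4 c5 c6) (replicateCol (Fin 1) v) (0 : Matrix (Fin 1) (Fin 3) ℝ) (0 : Matrix (Fin 1) (Fin 1) ℝ)) =
      fromBlocks (NormedSpace.exp (skewOmega c4 c5 c6))
        (replicateCol (Fin 1) ((se3J c4 c5 c6).mulVec v)) (0 : Matrix (Fin 1) (Fin 3) ℝ) (1 : Matrix (Fin 1) (Fin 1) ℝ) := by
  set Ω := skewOmega c4 c5 c6 with hΩdef
  set V := replicateCol (Fin 1) v with hVdef
  set M := fromBlocks Ω V (0 : Matrix (Fin 1) (Fin 3) ℝ) (0 : Matrix (Fin 1) (Fin 1) ℝ) with hMdef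
  let L : (Matrix (Fin 3) (Fin 3) ℝ × Matrix (Fin 3) (Fin 3) ℝ) →ₗ[ℝ]
      Matrix (Fin 3 ⊕ Fin 1) (Fin 3 ⊕ Fin 1) ℝ :=
    { toFun := fun p => fromBlocks p.1 (p.2 * V) (0 : Matrix (Fin 1) (Fin 3) ℝ)
        (0 : Matrix (Fin 1) (Fin 1) ℝ)
      map_add' := by
        intro p q
        rw [fromBlocks_add]
        simp [Matrix.add_mul]
      map_smul' := by
        intro r p
        rw [fromBlocks_smul]
        simp [smul_mul_assoc] }
  have hL : Continuous L := L.continuous_of_finiteDimensional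
  have hA := hasSum_exp_matrix Ω
  have hA1 : HasSum (fun n : ℕ => (((n+1).factorial : ℝ))⁻¹ • Ω ^ (n+1)) (NormedSpace.exp Ω - 1) := by
    have h := (hasSum_nat_add_iff' (f := fun n : ℕ => ((n.factorial : ℝ))⁻¹ • Ω ^ n) 1).mpr hA
    norm_num at h
    exact h
  have hB := hasSum_se3J c4 c5 c6 hq
  have hsum := (hA1.prodMk hB).map L.toAddMonoidHom hL
  have hfun : (⇑L.toAddMonoidHom ∘ fun n : ℕ =>
        ((((n+1).factorial : ℝ))⁻¹ • Ω ^ (n+1), (((n+1).factorial : ℝ))⁻¹ • Ω ^ n)) =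
      fun n : ℕ => (((n+1).factorial : ℝ))⁻¹ • M ^ (n+1) := by
    funext n
    show fromBlocks ((((n+1).factorial : ℝ))⁻¹ • Ω ^ (n+1))
        (((((n+1).factorial : ℝ))⁻¹ • Ω ^ n) * V) 0 0 = (((n+1).factorial : ℝ))⁻¹ • M ^ (n+1)
    rw [hMdef, blockM_pow, fromBlocks_smul]
    simp [smul_mul_assoc]
    exact ⟨rfl, rfl⟩
  rw [hfun] at hsum
  have hfinal := (hasSum_nat_add_iff (f := fun n : ℕ => ((n.factorial : ℝ))⁻¹ • M ^ n) 1).mp hsum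
  rw [exp_eq_tsum (𝕂 := ℝ)]
  refine hfinal.tsum_eq.trans ?_
  have hrange : ∑ i ∈ Finset.range 1, ((i.factorial : ℝ))⁻¹ • M ^ i = 1 := by norm_num
  rw [hrange]
  show fromBlocks (NormedSpace.exp Ω - 1) (se3J c4 c5 c6 * V) 0 0 + 1 = _
  rw [replicateCol_mulVec, ← hVdef, ← fromBlocks_one, fromBlocks_add]
  simp
end
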